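/- arXiv:1303.6626 — 3 statements merged into one kernel-verified Lean document; each statement's English description precedes it below -/
import Mathlib

section
/- Let $c_1 > 0$, $d \ge 3$, $T > 0$, and let $D \subset \mathbb{R}^d$ be a bounded open set with $\mathrm{diam}(D)^2 = T$. Then there exist constants $c, C > 0$ depending only on $d, c_1, T$ such that for all distinct $x, y \in D$, $$c\, g_D(x,y) \le \int_0^T \Big(1 \wedge \frac{\delta_D(x)}{\sqrt t}\Big)\Big(1 \wedge \frac{\delta_D(y)}{\sqrt t}\Big) t^{-d/2} e^{-c_1 |x-y|^2/t}\, dt \le C\, g_D(x,y),$$ where $g_D(x,y) = \frac{1}{|x-y|^{d-2}}\Big(1 \wedge \frac{\delta_D(x)\delta_D(y)}{|x-y|^2}\Big)$. -/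
open Set MeasureTheory Metric

lemma aux_exp_bound (n : ℕ) {x : ℝ} (hx : 0 < x) :
    Real.exp (-x) ≤ (Nat.factorial n : ℝ) / x ^ n := by
  rw [Real.exp_neg]
  have h := Real.pow_div_factorial_le_exp (x := x) hx.le n
  have h2 : (0:ℝ) < x ^ n / (Nat.factorial n : ℝ) := by positivity
  calc (Real.exp x)⁻¹ ≤ (x ^ n / (Nat.factorial n : ℝ))⁻¹ := inv_anti₀ h2 h
    _ = (Nat.factorial n : ℝ) / x ^ n := by rw [inv_div]

lemma aux_min_mul_le {a b : ℝ} (ha : 0 ≤ a) (hb : 0 ≤ b) :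
    min 1 a * min 1 b ≤ min 1 (a * b) := by
  refine le_min ?_ ?_
  · exact mul_le_one₀ (min_le_left 1 a) (le_min zero_le_one hb) (min_le_left 1 b)
  · exact mul_le_mul (min_le_right 1 a) (min_le_right 1 b) (le_min zero_le_one hb) ha

lemma aux_min_mul_ge {a b : ℝ} (ha : 0 ≤ a) (hb : 0 ≤ b) (hab : |a - b| ≤ 1) :
    min 1 (a * b) ≤ 2 * (min 1 a * min 1 b) := by
  rw [abs_le] at hab
  rcases le_total a 1 with h1 | h1 <;> rcases le_total b 1 with h2 | h2
  · rw [min_eq_right h1, min_eq_right h2]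
    have := min_le_right 1 (a * b); nlinarith
  · rw [min_eq_right h1, min_eq_left h2]
    have := min_le_right 1 (a * b); nlinarith
  · rw [min_eq_left h1, min_eq_right h2]
    have := min_le_right 1 (a * b); nlinarith
  · rw [min_eq_left h1, min_eq_left h2]
    have := min_le_left 1 (a * b); nlinarith

lemma aux_min_div_le {A s t : ℝ} (hA : 0 ≤ A) (hs : 0 < s) (ht : 0 < t) :
    min 1 (A / t) ≤ min 1 (A / s) * (1 + s / t) := by
  have hst : (0:ℝ) < s / t := div_pos hs ht
  rcases le_total s t with h | h
  · have h1 : min 1 (A / t) ≤ min 1 (A / s) :=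
      min_le_min le_rfl (div_le_div_of_nonneg_left hA hs h)
    have h2 : (0:ℝ) ≤ min 1 (A / s) := le_min zero_le_one (by positivity)
    nlinarith
  · have hts : 1 ≤ s / t := (one_le_div ht).mpr h
    rcases le_total 1 (A / s) with h3 | h3
    · rw [min_eq_left h3]
      have := min_le_left 1 (A / t); nlinarith
    · rw [min_eq_right h3]
      have h4 : min 1 (A / t) ≤ A / t := min_le_right _ _
      have h5 : A / t = (A / s) * (s / t) := by field_simp
      nlinarith [div_nonneg hA hs.le]

set_option maxHeartbeats 2000000 in
theorem stmt_5 (d : ℕ) (hd : 3 ≤ d) (c1 T : ℝ) (hc1 : 0 < c1) (hT : 0 < T)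
    (D : Set (EuclideanSpace ℝ (Fin d))) (hDo : IsOpen D) (hDb : Bornology.IsBounded D)
    (hdiam : (EMetric.diam D).toReal ^ 2 = T) :
    ∃ c > (0:ℝ), ∃ C > (0:ℝ), ∀ x ∈ D, ∀ y ∈ D, x ≠ y →
      c * ((1 / dist x y ^ (d - 2)) * min 1 (infDist x Dᶜ * infDist y Dᶜ / dist x y ^ 2)) ≤
        (∫ t in Ioc (0:ℝ) T,
          min 1 (infDist x Dᶜ / Real.sqrt t) * min 1 (infDist y Dᶜ / Real.sqrt t) *
            (t ^ (-(d:ℝ) / 2) * Real.exp (-c1 * dist x y ^ 2 / t))) ∧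
      (∫ t in Ioc (0:ℝ) T,
          min 1 (infDist x Dᶜ / Real.sqrt t) * min 1 (infDist y Dᶜ / Real.sqrt t) *
            (t ^ (-(d:ℝ) / 2) * Real.exp (-c1 * dist x y ^ 2 / t))) ≤
        C * ((1 / dist x y ^ (d - 2)) * min 1 (infDist x Dᶜ * infDist y Dᶜ / dist x y ^ 2)) := by

  have hd0 : (0:ℝ) < (d:ℝ) := by exact_mod_cast Nat.pos_of_ne_zero (by omega)
  have hd3 : (3:ℝ) ≤ (d:ℝ) := by exact_mod_cast hd
  set K1 : ℝ := (Nat.factorial d : ℝ) / c1 ^ d * (2 / ((d:ℝ) + 2) + 2 / (d:ℝ)) with hK1def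
  have hK1pos : 0 < K1 := by
    have h1 : (0:ℝ) < (Nat.factorial d : ℝ) := by exact_mod_cast Nat.factorial_pos d
    have h2 : (0:ℝ) < c1 ^ d := pow_pos hc1 d
    have h3 : (0:ℝ) < 2 / ((d:ℝ) + 2) + 2 / (d:ℝ) := by positivity
    positivity
  have hC2pos : (0:ℝ) < 2 / ((d:ℝ) - 2) := by
    apply div_pos two_pos; linarith
  refine ⟨Real.exp (-(2 * c1)) / 4, by positivity, K1 + 2 / ((d:ℝ) - 2),
    by linarith, ?_⟩
  intro x hx y hy hxy
  set δx := infDist x Dᶜ with hδxdef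
  set δy := infDist y Dᶜ with hδydef
  set r := dist x y with hrdef
  have hr : 0 < r := dist_pos.mpr hxy
  have hδx : 0 ≤ δx := infDist_nonneg
  have hδy : 0 ≤ δy := infDist_nonneg
  have hr2 : (0:ℝ) < r ^ 2 := by positivity
  have hrT : r ^ 2 ≤ T := by
    have h1 : r ≤ Metric.diam D := Metric.dist_le_diam_of_mem hDb hx hy
    have h2 : Metric.diam D ^ 2 = T := hdiam
    nlinarith [Metric.diam_nonneg (s := D) (α := EuclideanSpace ℝ (Fin d))]
  have hlip : |δx - δy| ≤ r := by
    have h1 := Metric.infDist_le_infDist_add_dist (x := x) (y := y) (s := Dᶜ)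
    have h2 := Metric.infDist_le_infDist_add_dist (x := y) (y := x) (s := Dᶜ)
    rw [dist_comm y x] at h2
    rw [← hδxdef, ← hδydef, ← hrdef] at h1 h2
    rw [abs_sub_le_iff]
    exact ⟨by linarith, by linarith⟩
  set M := min 1 (δx * δy / r ^ 2) with hMdef
  have hM0 : 0 ≤ M := le_min zero_le_one (by positivity)
  set F : ℝ → ℝ := fun t => min 1 (δx / Real.sqrt t) * min 1 (δy / Real.sqrt t) *
      (t ^ (-(d:ℝ) / 2) * Real.exp (-c1 * r ^ 2 / t)) with hFdef
  -- basic pointwise facts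
  have hF0 : ∀ t : ℝ, 0 < t → 0 ≤ F t := by
    intro t ht
    have h1 : 0 ≤ min 1 (δx / Real.sqrt t) := le_min zero_le_one (by positivity)
    have h2 : 0 ≤ min 1 (δy / Real.sqrt t) := le_min zero_le_one (by positivity)
    have h3 : 0 ≤ t ^ (-(d:ℝ) / 2) * Real.exp (-c1 * r ^ 2 / t) := by positivity
    exact mul_nonneg (mul_nonneg h1 h2) h3
  have hFm : Measurable F := by
    rw [hFdef]; fun_prop
  -- rpow arithmetic helpers
  have hrpow1 : ∀ t : ℝ, 0 < t → t ^ (-(d:ℝ) / 2) * t ^ (d:ℕ) = t ^ ((d:ℝ) / 2) := by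
    intro t ht
    rw [← Real.rpow_natCast t d, ← Real.rpow_add ht]
    congr 1; ring
  -- bound on F
  have hFb : ∀ t ∈ Ioc (0:ℝ) T, F t ≤ (Nat.factorial d : ℝ) / (c1 * r ^ 2) ^ d * T ^ ((d:ℝ) / 2) := by
    intro t ht
    obtain ⟨ht0, htT⟩ := ht
    have h1 : min 1 (δx / Real.sqrt t) * min 1 (δy / Real.sqrt t) ≤ 1 :=
      mul_le_one₀ (min_le_left _ _) (le_min zero_le_one (by positivity)) (min_le_left _ _)
    have hP : (0:ℝ) ≤ t ^ (-(d:ℝ) / 2) := Real.rpow_nonneg ht0.le _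
    have hexp : Real.exp (-c1 * r ^ 2 / t) ≤ (Nat.factorial d : ℝ) * t ^ (d:ℕ) / (c1 * r ^ 2) ^ d := by
      have h2 : (0:ℝ) < c1 * r ^ 2 / t := by positivity
      have h3 := aux_exp_bound d h2
      have h4 : -(c1 * r ^ 2 / t) = -c1 * r ^ 2 / t := by ring
      rw [h4] at h3
      have h5 : (Nat.factorial d : ℝ) / (c1 * r ^ 2 / t) ^ d
          = (Nat.factorial d : ℝ) * t ^ (d:ℕ) / (c1 * r ^ 2) ^ d := by
        rw [div_pow, div_div_eq_mul_div]
      rw [← h5]; exact h3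
    calc F t ≤ t ^ (-(d:ℝ) / 2) * Real.exp (-c1 * r ^ 2 / t) := by
          exact mul_le_of_le_one_left (by positivity) h1
      _ ≤ t ^ (-(d:ℝ) / 2) * ((Nat.factorial d : ℝ) * t ^ (d:ℕ) / (c1 * r ^ 2) ^ d) :=
          mul_le_mul_of_nonneg_left hexp hP
      _ = (Nat.factorial d : ℝ) / (c1 * r ^ 2) ^ d * (t ^ (-(d:ℝ) / 2) * t ^ (d:ℕ)) := by ring
      _ = (Nat.factorial d : ℝ) / (c1 * r ^ 2) ^ d * t ^ ((d:ℝ) / 2) := by rw [hrpow1 t ht0]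
      _ ≤ (Nat.factorial d : ℝ) / (c1 * r ^ 2) ^ d * T ^ ((d:ℝ) / 2) := by
          apply mul_le_mul_of_nonneg_left (Real.rpow_le_rpow ht0.le htT (by positivity))
          positivity
  have hFi : IntegrableOn F (Ioc (0:ℝ) T) := by
    refine Integrable.mono' (g := fun _ => (Nat.factorial d : ℝ) / (c1 * r ^ 2) ^ d * T ^ ((d:ℝ) / 2))
      (integrableOn_const measure_Ioc_lt_top.ne) hFm.aestronglyMeasurable.restrict ?_
    filter_upwards [ae_restrict_mem measurableSet_Ioc] with t ht
    rw [Real.norm_eq_abs, abs_of_nonneg (hF0 t ht.1)]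
    exact hFb t ht
  constructor
  · -- LOWER BOUND
    set L := min 1 (δx / r) * min 1 (δy / r) * ((r ^ 2) ^ (-(d:ℝ) / 2) * Real.exp (-(2 * c1)))
      with hLdef
    have hm1r : 0 ≤ min 1 (δx / r) := le_min zero_le_one (by positivity)
    have hm2r : 0 ≤ min 1 (δy / r) := le_min zero_le_one (by positivity)
    have hsub : Ioc (r ^ 2 / 2) (r ^ 2) ⊆ Ioc (0:ℝ) T := Ioc_subset_Ioc (by positivity) hrT
    have step2 : ∫ t in Ioc (r ^ 2 / 2) (r ^ 2), L ≤ ∫ t in Ioc (r ^ 2 / 2) (r ^ 2), F t := by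
      refine setIntegral_mono_on (integrableOn_const measure_Ioc_lt_top.ne)
        (hFi.mono_set hsub) measurableSet_Ioc ?_
      intro t ht
      have ht0 : 0 < t := lt_trans (by positivity) ht.1
      have hst : Real.sqrt t ≤ r := by
        calc Real.sqrt t ≤ Real.sqrt (r ^ 2) := Real.sqrt_le_sqrt ht.2
          _ = r := Real.sqrt_sq hr.le
      have hst0 : 0 < Real.sqrt t := Real.sqrt_pos.mpr ht0
      have ha1 : min 1 (δx / r) ≤ min 1 (δx / Real.sqrt t) :=
        min_le_min le_rfl (div_le_div_of_nonneg_left hδx hst0 hst)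
      have ha2 : min 1 (δy / r) ≤ min 1 (δy / Real.sqrt t) :=
        min_le_min le_rfl (div_le_div_of_nonneg_left hδy hst0 hst)
      have hb1 : ((r:ℝ) ^ 2) ^ (-(d:ℝ) / 2) ≤ t ^ (-(d:ℝ) / 2) := by
        apply Real.rpow_le_rpow_of_nonpos ht0 ht.2
        have : (0:ℝ) ≤ (d:ℝ) := hd0.le
        linarith
      have hb2 : Real.exp (-(2 * c1)) ≤ Real.exp (-c1 * r ^ 2 / t) := by
        apply Real.exp_le_exp.mpr
        rw [neg_mul, neg_div, neg_le_neg_iff, div_le_iff₀ ht0]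
        nlinarith [ht.1]
      have hcc : (0:ℝ) ≤ (r ^ 2) ^ (-(d:ℝ) / 2) := Real.rpow_nonneg hr2.le _
      calc L ≤ (min 1 (δx / Real.sqrt t) * min 1 (δy / Real.sqrt t)) *
            ((r ^ 2) ^ (-(d:ℝ) / 2) * Real.exp (-(2 * c1))) := by
            apply mul_le_mul_of_nonneg_right (mul_le_mul ha1 ha2 hm2r (le_trans hm1r ha1))
            positivity
        _ ≤ (min 1 (δx / Real.sqrt t) * min 1 (δy / Real.sqrt t)) *
            (t ^ (-(d:ℝ) / 2) * Real.exp (-c1 * r ^ 2 / t)) := by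
            apply mul_le_mul_of_nonneg_left
              (mul_le_mul hb1 hb2 (Real.exp_pos _).le (Real.rpow_nonneg ht0.le _))
            exact mul_nonneg (le_trans hm1r ha1) (le_trans hm2r ha2)
        _ = F t := rfl
    have step1 : ∫ t in Ioc (r ^ 2 / 2) (r ^ 2), L = L * (r ^ 2 / 2) := by
      rw [setIntegral_const, Real.volume_real_Ioc_of_le (by linarith : r ^ 2 / 2 ≤ r ^ 2), smul_eq_mul]
      ring
    have step3 : ∫ t in Ioc (r ^ 2 / 2) (r ^ 2), F t ≤ ∫ t in Ioc (0:ℝ) T, F t := by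
      refine setIntegral_mono_set hFi ?_ (HasSubset.Subset.eventuallyLE hsub)
      exact (ae_restrict_iff' measurableSet_Ioc).mpr (ae_of_all _ fun t ht => hF0 t ht.1)
    -- algebra
    have hkey : ((r:ℝ) ^ 2) ^ (-(d:ℝ) / 2) * r ^ 2 = 1 / r ^ (d - 2) := by
      have h2 : ((r:ℝ) ^ 2 : ℝ) = r ^ ((2:ℕ):ℝ) := (Real.rpow_natCast r 2).symm
      rw [h2, ← Real.rpow_mul hr.le, ← Real.rpow_add hr, ← Real.rpow_natCast r (d - 2),
        one_div, ← Real.rpow_neg hr.le]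
      congr 1
      push_cast [Nat.cast_sub (show (2:ℕ) ≤ d by omega)]
      ring
    have hMlow : M ≤ 2 * (min 1 (δx / r) * min 1 (δy / r)) := by
      have hab : (δx / r) * (δy / r) = δx * δy / r ^ 2 := by
        rw [div_mul_div_comm, ← pow_two]
      have habs : |δx / r - δy / r| ≤ 1 := by
        rw [div_sub_div_same, abs_div, abs_of_pos hr, div_le_one hr]
        exact hlip
      have h := aux_min_mul_ge (div_nonneg hδx hr.le) (div_nonneg hδy hr.le) habs
      rw [hab] at h
      exact h
    have hfinal : Real.exp (-(2 * c1)) / 4 * (1 / r ^ (d - 2) * M) ≤ L * (r ^ 2 / 2) := by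
      rw [← hkey]
      have hPP : (0:ℝ) ≤ (r ^ 2) ^ (-(d:ℝ) / 2) := Real.rpow_nonneg hr2.le _
      calc Real.exp (-(2 * c1)) / 4 * ((r ^ 2) ^ (-(d:ℝ) / 2) * r ^ 2 * M)
          = ((r ^ 2) ^ (-(d:ℝ) / 2) * Real.exp (-(2 * c1)) * (r ^ 2 / 4)) * M := by ring
        _ ≤ ((r ^ 2) ^ (-(d:ℝ) / 2) * Real.exp (-(2 * c1)) * (r ^ 2 / 4)) *
            (2 * (min 1 (δx / r) * min 1 (δy / r))) := by
            apply mul_le_mul_of_nonneg_left hMlow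
            positivity
        _ = L * (r ^ 2 / 2) := by rw [hLdef]; ring
    calc Real.exp (-(2 * c1)) / 4 * (1 / r ^ (d - 2) * M) ≤ L * (r ^ 2 / 2) := hfinal
      _ = ∫ t in Ioc (r ^ 2 / 2) (r ^ 2), L := step1.symm
      _ ≤ ∫ t in Ioc (r ^ 2 / 2) (r ^ 2), F t := step2
      _ ≤ ∫ t in Ioc (0:ℝ) T, F t := step3
  · -- UPPER BOUND
    have hsub1 : Ioc (0:ℝ) (r ^ 2) ⊆ Ioc (0:ℝ) T := Ioc_subset_Ioc le_rfl hrT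
    have hsub2 : Ioc (r ^ 2) T ⊆ Ioc (0:ℝ) T := Ioc_subset_Ioc hr2.le le_rfl
    have hsplit : (∫ t in Ioc (0:ℝ) T, F t)
        = (∫ t in Ioc (0:ℝ) (r ^ 2), F t) + ∫ t in Ioc (r ^ 2) T, F t := by
      rw [← Set.Ioc_union_Ioc_eq_Ioc hr2.le hrT,
        setIntegral_union (Set.Ioc_disjoint_Ioc_of_le le_rfl) measurableSet_Ioc
          (hFi.mono_set hsub1) (hFi.mono_set hsub2)]
    -- npow/rpow bridges
    have hpow : ∀ n : ℕ, ((r:ℝ) ^ 2) ^ ((n:ℝ) / 2) = r ^ n := by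
      intro n
      have h2 : ((r:ℝ) ^ 2 : ℝ) = r ^ ((2:ℕ):ℝ) := (Real.rpow_natCast r 2).symm
      conv_lhs => rw [h2, ← Real.rpow_mul hr.le]
      rw [← Real.rpow_natCast r n]
      congr 1
      push_cast
      ring
    have hq : ((r:ℝ) ^ 2) ^ (-(d:ℝ) / 2 + 1) = 1 / r ^ (d - 2) := by
      have h2 : ((r:ℝ) ^ 2 : ℝ) = r ^ ((2:ℕ):ℝ) := (Real.rpow_natCast r 2).symm
      conv_lhs => rw [h2, ← Real.rpow_mul hr.le]
      rw [← Real.rpow_natCast r (d - 2), one_div, ← Real.rpow_neg hr.le]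
      congr 1
      push_cast [Nat.cast_sub (show (2:ℕ) ≤ d by omega)]
      ring
    have hX : (r:ℝ) ^ (d:ℕ) = r ^ (d - 2) * r ^ 2 := by
      rw [← pow_add]
      congr 1
      omega
    have hdne : -(d:ℝ) / 2 ≠ -1 := by
      intro h
      have : (d:ℝ) = 2 := by linarith
      linarith
    -- piece 2
    have hmaj2 : ∀ t ∈ Ioc (r ^ 2) T, F t ≤ M * t ^ (-(d:ℝ) / 2) := by
      intro t ht
      have ht0 : 0 < t := lt_trans hr2 ht.1
      have hmm : min 1 (δx / Real.sqrt t) * min 1 (δy / Real.sqrt t) ≤ M := by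
        have h1 : (δx / Real.sqrt t) * (δy / Real.sqrt t) = δx * δy / t := by
          rw [div_mul_div_comm, Real.mul_self_sqrt ht0.le]
        have h2 := aux_min_mul_le (div_nonneg hδx (Real.sqrt_nonneg t))
          (div_nonneg hδy (Real.sqrt_nonneg t))
        rw [h1] at h2
        refine h2.trans (min_le_min le_rfl ?_)
        exact div_le_div_of_nonneg_left (mul_nonneg hδx hδy) hr2 ht.1.le
      have hexp1 : Real.exp (-c1 * r ^ 2 / t) ≤ 1 := by
        apply Real.exp_le_one_iff.mpr
        rw [neg_mul, neg_div]
        exact neg_nonpos.mpr (by positivity)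
      have hP : 0 ≤ t ^ (-(d:ℝ) / 2) := Real.rpow_nonneg ht0.le _
      calc F t ≤ M * (t ^ (-(d:ℝ) / 2) * Real.exp (-c1 * r ^ 2 / t)) :=
            mul_le_mul_of_nonneg_right hmm (by positivity)
        _ ≤ M * (t ^ (-(d:ℝ) / 2) * 1) := by
            apply mul_le_mul_of_nonneg_left (mul_le_mul_of_nonneg_left hexp1 hP) hM0
        _ = M * t ^ (-(d:ℝ) / 2) := by rw [mul_one]
    have hIq : IntervalIntegrable (fun t : ℝ => t ^ (-(d:ℝ) / 2)) volume (r ^ 2) T :=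
      intervalIntegral.intervalIntegrable_rpow (Or.inr (notMem_uIcc_of_lt hr2 hT))
    have hp2 : (∫ t in Ioc (r ^ 2) T, F t) ≤ 2 / ((d:ℝ) - 2) * (1 / r ^ (d - 2) * M) := by
      have hIq' : IntegrableOn (fun t : ℝ => M * t ^ (-(d:ℝ) / 2)) (Ioc (r ^ 2) T) volume :=
        hIq.1.const_mul M
      have h1 : (∫ t in Ioc (r ^ 2) T, F t) ≤ ∫ t in Ioc (r ^ 2) T, M * t ^ (-(d:ℝ) / 2) :=
        setIntegral_mono_on (hFi.mono_set hsub2) hIq' measurableSet_Ioc hmaj2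
      have h2 : (∫ t in Ioc (r ^ 2) T, M * t ^ (-(d:ℝ) / 2))
          = M * ∫ t in (r ^ 2)..T, t ^ (-(d:ℝ) / 2) := by
        rw [MeasureTheory.integral_const_mul, ← intervalIntegral.integral_of_le hrT]
      have h3 : (∫ t in (r ^ 2)..T, t ^ (-(d:ℝ) / 2))
          = (T ^ (-(d:ℝ) / 2 + 1) - (r ^ 2) ^ (-(d:ℝ) / 2 + 1)) / (-(d:ℝ) / 2 + 1) :=
        integral_rpow (Or.inr ⟨hdne, notMem_uIcc_of_lt hr2 hT⟩)
      have hTq : 0 < T ^ (-(d:ℝ) / 2 + 1) := Real.rpow_pos_of_pos hT _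
      have hqneg : -(d:ℝ) / 2 + 1 < 0 := by linarith
      have h4 : (T ^ (-(d:ℝ) / 2 + 1) - (r ^ 2) ^ (-(d:ℝ) / 2 + 1)) / (-(d:ℝ) / 2 + 1)
          ≤ 2 / ((d:ℝ) - 2) * (1 / r ^ (d - 2)) := by
        rw [← hq]
        rw [div_le_iff_of_neg hqneg]
        have hrq : 0 < ((r:ℝ) ^ 2) ^ (-(d:ℝ) / 2 + 1) := Real.rpow_pos_of_pos hr2 _
        have hd2 : (0:ℝ) < (d:ℝ) - 2 := by linarith
        have : 2 / ((d:ℝ) - 2) * ((r ^ 2) ^ (-(d:ℝ) / 2 + 1)) * (-(d:ℝ) / 2 + 1)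
            = -((r ^ 2) ^ (-(d:ℝ) / 2 + 1)) * (((d:ℝ) - 2) / ((d:ℝ) - 2)) := by ring
        rw [this, div_self (ne_of_gt hd2)]
        nlinarith
      calc (∫ t in Ioc (r ^ 2) T, F t) ≤ M * ((T ^ (-(d:ℝ) / 2 + 1) - (r ^ 2) ^ (-(d:ℝ) / 2 + 1)) / (-(d:ℝ) / 2 + 1)) := by
            rw [← h3, ← h2]; exact h1
        _ ≤ M * (2 / ((d:ℝ) - 2) * (1 / r ^ (d - 2))) := mul_le_mul_of_nonneg_left h4 hM0
        _ = 2 / ((d:ℝ) - 2) * (1 / r ^ (d - 2) * M) := by ring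
    -- piece 1
    set c0 : ℝ := (Nat.factorial d : ℝ) / (c1 ^ d * (r ^ 2) ^ d) with hc0def
    have hfac : (0:ℝ) < (Nat.factorial d : ℝ) := by exact_mod_cast Nat.factorial_pos d
    have hc0pos : 0 < c0 := by positivity
    have hexpb : ∀ t : ℝ, 0 < t →
        Real.exp (-c1 * r ^ 2 / t) ≤ (Nat.factorial d : ℝ) * t ^ (d:ℕ) / (c1 * r ^ 2) ^ d := by
      intro t ht0
      have h2 : (0:ℝ) < c1 * r ^ 2 / t := by positivity
      have h3 := aux_exp_bound d h2
      have h4 : -(c1 * r ^ 2 / t) = -c1 * r ^ 2 / t := by ring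
      rw [h4] at h3
      have h5 : (Nat.factorial d : ℝ) / (c1 * r ^ 2 / t) ^ d
          = (Nat.factorial d : ℝ) * t ^ (d:ℕ) / (c1 * r ^ 2) ^ d := by
        rw [div_pow, div_div_eq_mul_div]
      rw [← h5]
      exact h3
    have hmaj1 : ∀ t ∈ Ioc (0:ℝ) (r ^ 2), F t
        ≤ M * (c0 * (t ^ ((d:ℝ) / 2) + r ^ 2 * t ^ ((d:ℝ) / 2 - 1))) := by
      intro t ht
      have ht0 : 0 < t := ht.1
      have hmm : min 1 (δx / Real.sqrt t) * min 1 (δy / Real.sqrt t) ≤ min 1 (δx * δy / t) := by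
        have h1 : (δx / Real.sqrt t) * (δy / Real.sqrt t) = δx * δy / t := by
          rw [div_mul_div_comm, Real.mul_self_sqrt ht0.le]
        have h2 := aux_min_mul_le (div_nonneg hδx (Real.sqrt_nonneg t))
          (div_nonneg hδy (Real.sqrt_nonneg t))
        rwa [h1] at h2
      have hmd := aux_min_div_le (mul_nonneg hδx hδy) hr2 ht0
      have hP : 0 ≤ t ^ (-(d:ℝ) / 2) := Real.rpow_nonneg ht0.le _
      have h1pr : (0:ℝ) ≤ 1 + r ^ 2 / t := by positivity
      have hm0' : 0 ≤ min 1 (δx / Real.sqrt t) * min 1 (δy / Real.sqrt t) :=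
        mul_nonneg (le_min zero_le_one (by positivity)) (le_min zero_le_one (by positivity))
      have hstep : F t ≤ (M * (1 + r ^ 2 / t)) * (t ^ (-(d:ℝ) / 2) * Real.exp (-c1 * r ^ 2 / t)) :=
        mul_le_mul (hmm.trans hmd) le_rfl (by positivity) (mul_nonneg hM0 h1pr)
      refine hstep.trans ?_
      have hstep2 : (M * (1 + r ^ 2 / t)) * (t ^ (-(d:ℝ) / 2) * Real.exp (-c1 * r ^ 2 / t))
          ≤ (M * (1 + r ^ 2 / t)) *
            (t ^ (-(d:ℝ) / 2) * ((Nat.factorial d : ℝ) * t ^ (d:ℕ) / (c1 * r ^ 2) ^ d)) := by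
        apply mul_le_mul_of_nonneg_left (mul_le_mul_of_nonneg_left (hexpb t ht0) hP)
        exact mul_nonneg hM0 h1pr
      refine hstep2.trans (le_of_eq ?_)
      have e1 : t ^ ((d:ℝ) / 2) = t ^ (-(d:ℝ) / 2) * t ^ (d:ℕ) := (hrpow1 t ht0).symm
      have e2 : t ^ ((d:ℝ) / 2 - 1) = t ^ (-(d:ℝ) / 2) * t ^ (d:ℕ) / t := by
        rw [Real.rpow_sub ht0, Real.rpow_one, e1]
      rw [e1, e2, hc0def, mul_pow]
      field_simp
    have hIa : IntervalIntegrable (fun t : ℝ => t ^ ((d:ℝ) / 2)) volume 0 (r ^ 2) :=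
      intervalIntegral.intervalIntegrable_rpow' (by linarith)
    have hIb : IntervalIntegrable (fun t : ℝ => t ^ ((d:ℝ) / 2 - 1)) volume 0 (r ^ 2) :=
      intervalIntegral.intervalIntegrable_rpow' (by linarith)
    have hp1 : (∫ t in Ioc (0:ℝ) (r ^ 2), F t) ≤ K1 * (1 / r ^ (d - 2) * M) := by
      have hg1i : IntegrableOn
          (fun t : ℝ => M * (c0 * (t ^ ((d:ℝ) / 2) + r ^ 2 * t ^ ((d:ℝ) / 2 - 1))))
          (Ioc (0:ℝ) (r ^ 2)) volume :=
        (((hIa.1.add (hIb.1.const_mul (r ^ 2))).const_mul c0).const_mul M)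
      have h1 : (∫ t in Ioc (0:ℝ) (r ^ 2), F t)
          ≤ ∫ t in Ioc (0:ℝ) (r ^ 2), M * (c0 * (t ^ ((d:ℝ) / 2) + r ^ 2 * t ^ ((d:ℝ) / 2 - 1))) :=
        setIntegral_mono_on (hFi.mono_set hsub1) hg1i measurableSet_Ioc hmaj1
      have h2 : (∫ t in Ioc (0:ℝ) (r ^ 2), M * (c0 * (t ^ ((d:ℝ) / 2) + r ^ 2 * t ^ ((d:ℝ) / 2 - 1))))
          = M * (c0 * ((∫ t in (0:ℝ)..(r ^ 2), t ^ ((d:ℝ) / 2))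
              + r ^ 2 * ∫ t in (0:ℝ)..(r ^ 2), t ^ ((d:ℝ) / 2 - 1))) := by
        rw [← intervalIntegral.integral_of_le hr2.le, intervalIntegral.integral_const_mul,
          intervalIntegral.integral_const_mul,
          intervalIntegral.integral_add hIa (hIb.const_mul (r ^ 2)),
          intervalIntegral.integral_const_mul]
      have hva : (∫ t in (0:ℝ)..(r ^ 2), t ^ ((d:ℝ) / 2)) = r ^ (d:ℕ) * r ^ 2 / ((d:ℝ) / 2 + 1) := by
        rw [integral_rpow (Or.inl (by linarith : (-1:ℝ) < (d:ℝ) / 2))]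
        rw [Real.zero_rpow (by positivity : (d:ℝ) / 2 + 1 ≠ 0), sub_zero]
        have hdd : (d:ℝ) / 2 + 1 = ((d + 2 : ℕ) : ℝ) / 2 := by push_cast; ring
        rw [hdd, hpow (d + 2), pow_add]
      have hvb : (∫ t in (0:ℝ)..(r ^ 2), t ^ ((d:ℝ) / 2 - 1)) = r ^ (d:ℕ) / ((d:ℝ) / 2) := by
        rw [integral_rpow (Or.inl (by linarith : (-1:ℝ) < (d:ℝ) / 2 - 1))]
        have hdd : (d:ℝ) / 2 - 1 + 1 = (d:ℝ) / 2 := by ring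
        rw [hdd, Real.zero_rpow (by positivity : (d:ℝ) / 2 ≠ 0), sub_zero, hpow d]
      have hfin : M * (c0 * (r ^ (d:ℕ) * r ^ 2 / ((d:ℝ) / 2 + 1)
            + r ^ 2 * (r ^ (d:ℕ) / ((d:ℝ) / 2)))) = K1 * (1 / r ^ (d - 2) * M) := by
        have hpp : ((r:ℝ) ^ 2) ^ (d:ℕ) = (r ^ (d - 2) * r ^ 2) * (r ^ (d - 2) * r ^ 2) := by
          rw [← hX, ← pow_mul, ← pow_add]
          congr 1
          ring
        rw [hc0def, hK1def, hX, hpp]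
        have hrd2 : (r:ℝ) ^ (d - 2) ≠ 0 := pow_ne_zero _ hr.ne'
        have hr2ne : (r:ℝ) ^ 2 ≠ 0 := hr2.ne'
        have hc1dne : c1 ^ d ≠ 0 := (pow_pos hc1 d).ne'
        have hdne0 : (d:ℝ) ≠ 0 := hd0.ne'
        have hd2ne : (d:ℝ) + 2 ≠ 0 := by linarith
        field_simp
      calc (∫ t in Ioc (0:ℝ) (r ^ 2), F t)
          ≤ M * (c0 * ((∫ t in (0:ℝ)..(r ^ 2), t ^ ((d:ℝ) / 2))
              + r ^ 2 * ∫ t in (0:ℝ)..(r ^ 2), t ^ ((d:ℝ) / 2 - 1))) := by rw [← h2]; exact h1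
        _ = K1 * (1 / r ^ (d - 2) * M) := by rw [hva, hvb, hfin]
    calc (∫ t in Ioc (0:ℝ) T, F t)
        = (∫ t in Ioc (0:ℝ) (r ^ 2), F t) + ∫ t in Ioc (r ^ 2) T, F t := hsplit
      _ ≤ K1 * (1 / r ^ (d - 2) * M) + 2 / ((d:ℝ) - 2) * (1 / r ^ (d - 2) * M) :=
          add_le_add hp1 hp2
      _ = (K1 + 2 / ((d:ℝ) - 2)) * (1 / r ^ (d - 2) * M) := by ring
end

section
/- Let $d = 2$ and $T > 0$. There is a constant $c > 0$ (depending on $T$) such that for all distinct $x, y$ in a bounded open set $D \subset \mathbb{R}^2$ with $\mathrm{diam}(D)^2 \le T$: $$\int_0^T \Big(1 \wedge \frac{\delta_D(x)}{\sqrt t}\Big)\Big(1 \wedge \frac{\delta_D(y)}{\sqrt t}\Big)\Big(t^{-1} \wedge \frac{t}{|x-y|^{4}}\Big) dt \le c\, \log\Big(1 + \frac{\delta_D(x)\delta_D(y)}{|x-y|^2}\Big).$$ -/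
open Set MeasureTheory Metric


lemma aux_inv_sq (p q : ℝ) (hp : 0 < p) (hpq : p ≤ q) :
    ∫ t in Ioc p q, t⁻¹ * t⁻¹ = p⁻¹ - q⁻¹ := by
  rw [← intervalIntegral.integral_of_le hpq]
  have h : ∀ t ∈ Set.uIcc p q, t⁻¹ * t⁻¹ = (t : ℝ) ^ (-2 : ℤ) := by
    intro t ht
    rw [zpow_neg, zpow_two, mul_inv]
  rw [intervalIntegral.integral_congr h, integral_zpow]
  · norm_num
    ring
  · right
    refine ⟨by norm_num, ?_⟩
    rw [Set.uIcc_of_le hpq]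
    intro h0
    exact absurd h0.1 (by linarith)

lemma aux_int_bound (f : ℝ → ℝ) (hf : Measurable f) (p q C : ℝ)
    (h : ∀ t ∈ Ioc p q, ‖f t‖ ≤ C) : IntegrableOn f (Ioc p q) := by
  apply Integrable.mono' (integrableOn_const (C := C) measure_Ioc_lt_top.ne)
    hf.aestronglyMeasurable
  rw [ae_restrict_iff' measurableSet_Ioc]
  exact .of_forall h

lemma aux_core (a b r T : ℝ) (ha : 0 ≤ a) (hb : 0 ≤ b) (hr : 0 < r) (hT : 0 < T)
    (hrT : r ^ 2 ≤ T) (hab : a * b ≤ T) :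
    (∫ t in Ioc (0:ℝ) T,
        min 1 (a / Real.sqrt t) * min 1 (b / Real.sqrt t) * min t⁻¹ (t / r ^ 4)) ≤
      5 * Real.log (1 + a * b / r ^ 2) := by
  set s : ℝ := r ^ 2 with hs_def
  have hs : 0 < s := by positivity
  set f : ℝ → ℝ := fun t =>
    min 1 (a / Real.sqrt t) * min 1 (b / Real.sqrt t) * min t⁻¹ (t / r ^ 4) with hf_def
  have hmeas : Measurable f := by fun_prop
  have habnn : 0 ≤ a * b := mul_nonneg ha hb
  have hu : 0 ≤ a * b / s := by positivity
  have hfacts : ∀ t, t ∈ Ioc (0:ℝ) T →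
      0 ≤ f t ∧ f t ≤ min t⁻¹ (t / r ^ 4) ∧ f t ≤ a * b * (t⁻¹ * min t⁻¹ (t / r ^ 4)) := by
    intro t ht
    have ht0 : 0 < t := ht.1
    have hsq : Real.sqrt t * Real.sqrt t = t := Real.mul_self_sqrt ht0.le
    have h1n : (0:ℝ) ≤ min 1 (a / Real.sqrt t) :=
      le_min zero_le_one (div_nonneg ha (Real.sqrt_nonneg t))
    have h2n : (0:ℝ) ≤ min 1 (b / Real.sqrt t) :=
      le_min zero_le_one (div_nonneg hb (Real.sqrt_nonneg t))
    have hmn : (0:ℝ) ≤ min t⁻¹ (t / r ^ 4) :=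
      le_min (inv_nonneg.2 ht0.le) (div_nonneg ht0.le (by positivity))
    refine ⟨mul_nonneg (mul_nonneg h1n h2n) hmn, ?_, ?_⟩
    · calc f t ≤ 1 * 1 * min t⁻¹ (t / r ^ 4) := by
            apply mul_le_mul_of_nonneg_right _ hmn
            exact mul_le_mul (min_le_left _ _) (min_le_left _ _) h2n zero_le_one
        _ = min t⁻¹ (t / r ^ 4) := by ring
    · have key : min 1 (a / Real.sqrt t) * min 1 (b / Real.sqrt t) ≤ a * b * t⁻¹ := by
        have heq : a / Real.sqrt t * (b / Real.sqrt t) = a * b * t⁻¹ := by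
          rw [div_mul_div_comm, hsq, div_eq_mul_inv]
        calc min 1 (a / Real.sqrt t) * min 1 (b / Real.sqrt t)
            ≤ a / Real.sqrt t * (b / Real.sqrt t) :=
              mul_le_mul (min_le_right _ _) (min_le_right _ _) h2n
                (div_nonneg ha (Real.sqrt_nonneg t))
          _ = a * b * t⁻¹ := heq
      calc f t ≤ a * b * t⁻¹ * min t⁻¹ (t / r ^ 4) :=
            mul_le_mul_of_nonneg_right key hmn
        _ = a * b * (t⁻¹ * min t⁻¹ (t / r ^ 4)) := by ring
  have hfC : ∀ t ∈ Ioc (0:ℝ) T, ‖f t‖ ≤ s⁻¹ := by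
    intro t ht
    rw [Real.norm_eq_abs, abs_of_nonneg (hfacts t ht).1]
    refine le_trans (hfacts t ht).2.1 ?_
    rcases le_or_gt t s with h | h
    · refine le_trans (min_le_right _ _) ?_
      rw [div_le_iff₀ (by positivity)]
      calc t ≤ s := h
        _ = s⁻¹ * r ^ 4 := by rw [hs_def]; field_simp
    · exact le_trans (min_le_left _ _) (by
        rw [inv_le_inv₀ ht.1 hs]
        exact h.le)
  have hint : IntegrableOn f (Ioc 0 T) := aux_int_bound f hmeas 0 T s⁻¹ hfC
  have hlog_nonneg : 0 ≤ Real.log (1 + a * b / s) :=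
    Real.log_nonneg (by linarith)
  rcases le_or_gt (a * b) s with hcase | hcase
  · -- case u ≤ 1
    set g : ℝ → ℝ := fun t => a * b * min (t⁻¹ * t⁻¹) ((r ^ 4)⁻¹) with hg_def
    have hgmeas : Measurable g := by fun_prop
    have hgnn : ∀ t, 0 ≤ g t := by
      intro t
      exact mul_nonneg habnn (le_min (mul_self_nonneg _) (inv_nonneg.2 (by positivity)))
    have hgC : ∀ t ∈ Ioc (0:ℝ) T, ‖g t‖ ≤ a * b * (r ^ 4)⁻¹ := by
      intro t ht
      rw [Real.norm_eq_abs, abs_of_nonneg (hgnn t)]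
      exact mul_le_mul_of_nonneg_left (min_le_right _ _) habnn
    have hgint : IntegrableOn g (Ioc 0 T) := aux_int_bound g hgmeas 0 T _ hgC
    have hfg : ∀ t ∈ Ioc (0:ℝ) T, f t ≤ g t := by
      intro t ht
      refine le_trans (hfacts t ht).2.2 ?_
      apply mul_le_mul_of_nonneg_left _ habnn
      have ht0 : t ≠ 0 := ne_of_gt ht.1
      rw [mul_min_of_nonneg _ _ (inv_nonneg.2 ht.1.le)]
      apply min_le_min le_rfl
      rw [mul_div_assoc', inv_mul_cancel₀ ht0]
      simp [one_div]
    have step1 : (∫ t in Ioc (0:ℝ) T, f t) ≤ ∫ t in Ioc (0:ℝ) T, g t :=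
      setIntegral_mono_on hint hgint measurableSet_Ioc hfg
    have hsplit : (∫ t in Ioc (0:ℝ) T, g t)
        = (∫ t in Ioc (0:ℝ) s, g t) + ∫ t in Ioc s T, g t := by
      rw [← Ioc_union_Ioc_eq_Ioc hs.le hrT]
      exact setIntegral_union (Ioc_disjoint_Ioc_of_le le_rfl) measurableSet_Ioc
        (hgint.mono_set (Ioc_subset_Ioc le_rfl hrT))
        (hgint.mono_set (Ioc_subset_Ioc hs.le le_rfl))
    have p1 : (∫ t in Ioc (0:ℝ) s, g t) ≤ a * b / s := by
      calc (∫ t in Ioc (0:ℝ) s, g t) ≤ ∫ _t in Ioc (0:ℝ) s, a * b * (r ^ 4)⁻¹ := by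
            apply setIntegral_mono_on (hgint.mono_set (Ioc_subset_Ioc le_rfl hrT))
              (integrableOn_const measure_Ioc_lt_top.ne) measurableSet_Ioc
            intro t ht
            exact mul_le_mul_of_nonneg_left (min_le_right _ _) habnn
        _ = s * (a * b * (r ^ 4)⁻¹) := by
            rw [setIntegral_const, Real.volume_real_Ioc, smul_eq_mul, sub_zero,
              max_eq_left hs.le]
        _ = a * b / s := by
            rw [hs_def]; field_simp
    have p2 : (∫ t in Ioc s T, g t) ≤ a * b / s := by
      have hmono : (∫ t in Ioc s T, g t) ≤ ∫ t in Ioc s T, a * b * (t⁻¹ * t⁻¹) := by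
        apply setIntegral_mono_on (hgint.mono_set (Ioc_subset_Ioc hs.le le_rfl))
          (aux_int_bound _ (by fun_prop) s T (a * b * (s⁻¹ * s⁻¹)) ?_) measurableSet_Ioc
        · intro t ht
          exact mul_le_mul_of_nonneg_left (min_le_left _ _) habnn
        · intro t ht
          have ht0 : 0 < t := lt_trans hs ht.1
          rw [Real.norm_eq_abs, abs_of_nonneg (mul_nonneg habnn (mul_self_nonneg _))]
          apply mul_le_mul_of_nonneg_left _ habnn
          have h1 : t⁻¹ ≤ s⁻¹ := by rw [inv_le_inv₀ ht0 hs]; exact ht.1.le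
          exact mul_le_mul h1 h1 (inv_nonneg.2 ht0.le) (inv_nonneg.2 hs.le)
      have hval : (∫ t in Ioc s T, a * b * (t⁻¹ * t⁻¹)) = a * b * (s⁻¹ - T⁻¹) := by
        rw [integral_const_mul, aux_inv_sq s T hs hrT]
      calc (∫ t in Ioc s T, g t) ≤ a * b * (s⁻¹ - T⁻¹) := hval ▸ hmono
        _ ≤ a * b * s⁻¹ := by
            apply mul_le_mul_of_nonneg_left _ habnn
            have : 0 ≤ T⁻¹ := inv_nonneg.2 hT.le
            linarith
        _ = a * b / s := by rw [div_eq_mul_inv]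
    have hu1 : a * b / s ≤ 1 := by rw [div_le_one hs]; exact hcase
    have hlb : a * b / s / 2 ≤ Real.log (1 + a * b / s) := by
      have hpos : (0:ℝ) < 1 + a * b / s := by linarith
      have h2 := Real.log_le_sub_one_of_pos (inv_pos.2 hpos)
      rw [Real.log_inv] at h2
      have h3 : 1 - (1 + a * b / s)⁻¹ ≤ Real.log (1 + a * b / s) := by linarith
      refine le_trans ?_ h3
      have h4 : (1 + a * b / s)⁻¹ * (1 + a * b / s) = 1 := inv_mul_cancel₀ (ne_of_gt hpos)
      nlinarith [mul_nonneg hu (sub_nonneg.2 hu1), inv_nonneg.2 hpos.le]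
    calc (∫ t in Ioc (0:ℝ) T, f t) ≤ a * b / s + a * b / s := by
          refine le_trans step1 ?_
          rw [hsplit]
          exact add_le_add p1 p2
      _ ≤ 5 * Real.log (1 + a * b / s) := by nlinarith [hlb]
  · -- case u > 1
    have habpos : 0 < a * b := lt_trans hs hcase
    have hsplit : (∫ t in Ioc (0:ℝ) T, f t)
        = (∫ t in Ioc (0:ℝ) s, f t) + ((∫ t in Ioc s (a*b), f t) + ∫ t in Ioc (a*b) T, f t) := by
      rw [← Ioc_union_Ioc_eq_Ioc (hs.le.trans hcase.le) hab,
        setIntegral_union (Ioc_disjoint_Ioc_of_le le_rfl) measurableSet_Ioc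
          (hint.mono_set (Ioc_subset_Ioc le_rfl hab))
          (hint.mono_set (Ioc_subset_Ioc habnn le_rfl)),
        ← Ioc_union_Ioc_eq_Ioc hs.le hcase.le,
        setIntegral_union (Ioc_disjoint_Ioc_of_le le_rfl) measurableSet_Ioc
          (hint.mono_set (Ioc_subset_Ioc le_rfl hrT))
          (hint.mono_set (Ioc_subset_Ioc hs.le hab))]
      ring
    have q1 : (∫ t in Ioc (0:ℝ) s, f t) ≤ 1 := by
      calc (∫ t in Ioc (0:ℝ) s, f t) ≤ ∫ _t in Ioc (0:ℝ) s, s⁻¹ := by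
            apply setIntegral_mono_on (hint.mono_set (Ioc_subset_Ioc le_rfl hrT))
              (integrableOn_const measure_Ioc_lt_top.ne) measurableSet_Ioc
            intro t ht
            have ht' : t ∈ Ioc (0:ℝ) T := Ioc_subset_Ioc le_rfl hrT ht
            have := hfC t ht'
            rw [Real.norm_eq_abs, abs_of_nonneg (hfacts t ht').1] at this
            exact this
        _ = s * s⁻¹ := by
            rw [setIntegral_const, Real.volume_real_Ioc, smul_eq_mul, sub_zero,
              max_eq_left hs.le]
        _ = 1 := mul_inv_cancel₀ (ne_of_gt hs)
    have q2 : (∫ t in Ioc s (a*b), f t) ≤ Real.log (a * b / s) := by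
      have hmono : (∫ t in Ioc s (a*b), f t) ≤ ∫ t in Ioc s (a*b), t⁻¹ := by
        apply setIntegral_mono_on (hint.mono_set (Ioc_subset_Ioc hs.le hab))
          (aux_int_bound _ (by fun_prop) s (a*b) s⁻¹ ?_) measurableSet_Ioc
        · intro t ht
          have ht' : t ∈ Ioc (0:ℝ) T := Ioc_subset_Ioc hs.le hab ht
          exact le_trans (hfacts t ht').2.1 (min_le_left _ _)
        · intro t ht
          have ht0 : 0 < t := lt_trans hs ht.1
          rw [Real.norm_eq_abs, abs_of_nonneg (inv_nonneg.2 ht0.le)]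
          rw [inv_le_inv₀ ht0 hs]; exact ht.1.le
      have hval : (∫ t in Ioc s (a*b), t⁻¹) = Real.log (a * b / s) := by
        rw [← intervalIntegral.integral_of_le hcase.le, integral_inv_of_pos hs habpos]
      exact hmono.trans_eq hval
    have q3 : (∫ t in Ioc (a*b) T, f t) ≤ 1 := by
      have hmono : (∫ t in Ioc (a*b) T, f t) ≤ ∫ t in Ioc (a*b) T, a * b * (t⁻¹ * t⁻¹) := by
        apply setIntegral_mono_on (hint.mono_set (Ioc_subset_Ioc habpos.le le_rfl))
          (aux_int_bound _ (by fun_prop) (a*b) T (a * b * ((a*b)⁻¹ * (a*b)⁻¹)) ?_)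
          measurableSet_Ioc
        · intro t ht
          have ht' : t ∈ Ioc (0:ℝ) T := Ioc_subset_Ioc habpos.le le_rfl ht
          refine le_trans (hfacts t ht').2.2 ?_
          exact mul_le_mul_of_nonneg_left (mul_le_mul_of_nonneg_left (min_le_left _ _)
            (inv_nonneg.2 ht'.1.le)) habnn
        · intro t ht
          have ht0 : 0 < t := lt_trans habpos ht.1
          rw [Real.norm_eq_abs, abs_of_nonneg (mul_nonneg habnn (mul_self_nonneg _))]
          apply mul_le_mul_of_nonneg_left _ habnn
          have h1 : t⁻¹ ≤ (a*b)⁻¹ := by rw [inv_le_inv₀ ht0 habpos]; exact ht.1.le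
          exact mul_le_mul h1 h1 (inv_nonneg.2 ht0.le) (inv_nonneg.2 habpos.le)
      have hval : (∫ t in Ioc (a*b) T, a * b * (t⁻¹ * t⁻¹)) = a * b * ((a*b)⁻¹ - T⁻¹) := by
        rw [integral_const_mul, aux_inv_sq (a*b) T habpos hab]
      calc (∫ t in Ioc (a*b) T, f t) ≤ a * b * ((a*b)⁻¹ - T⁻¹) := hval ▸ hmono
        _ ≤ a * b * (a*b)⁻¹ := by
            apply mul_le_mul_of_nonneg_left _ habnn
            have : 0 ≤ T⁻¹ := inv_nonneg.2 hT.le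
            linarith
        _ = 1 := mul_inv_cancel₀ (ne_of_gt habpos)
    -- conclude
    have hu1 : 1 < a * b / s := by rw [lt_div_iff₀ hs]; linarith
    have hl2 : (1:ℝ)/2 ≤ Real.log (1 + a * b / s) := by
      have : Real.log 2 ≤ Real.log (1 + a * b / s) :=
        Real.log_le_log (by norm_num) (by linarith)
      have h2 := Real.log_two_gt_d9
      linarith
    have hlog2 : Real.log (a * b / s) ≤ Real.log (1 + a * b / s) :=
      Real.log_le_log (by linarith) (by linarith)
    calc (∫ t in Ioc (0:ℝ) T, f t) ≤ 1 + (Real.log (a * b / s) + 1) := by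
          rw [hsplit]; exact add_le_add q1 (add_le_add q2 q3)
      _ ≤ 5 * Real.log (1 + a * b / s) := by linarith

lemma aux_infDist_le_diam (D : Set (EuclideanSpace ℝ (Fin 2))) (hD : Bornology.IsBounded D)
    {x : EuclideanSpace ℝ (Fin 2)} (hx : x ∈ D) : infDist x Dᶜ ≤ Metric.diam D := by
  by_contra h
  push_neg at h
  set e : EuclideanSpace ℝ (Fin 2) := EuclideanSpace.single 0 1 with he_def
  have he : ‖e‖ = 1 := by rw [he_def, EuclideanSpace.norm_single]; norm_num
  set c : ℝ := (Metric.diam D + infDist x Dᶜ) / 2 with hc_def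
  have hdnn : 0 ≤ Metric.diam D := diam_nonneg
  have hc1 : Metric.diam D < c := by rw [hc_def]; linarith
  have hc2 : c < infDist x Dᶜ := by rw [hc_def]; linarith
  have hc0 : 0 ≤ c := by rw [hc_def]; linarith
  have hdist : dist x (x + c • e) = c := by
    rw [dist_self_add_right, norm_smul, he, Real.norm_eq_abs, abs_of_nonneg hc0, mul_one]
  have hz : x + c • e ∈ D := by
    by_contra hz
    have h2 : infDist x Dᶜ ≤ dist x (x + c • e) := infDist_le_dist_of_mem hz
    rw [hdist] at h2
    linarith
  have h3 := dist_le_diam_of_mem hD hx hz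
  rw [hdist] at h3
  linarith


theorem stmt_7 (T : ℝ) (hT : 0 < T) :
    ∃ c > (0:ℝ), ∀ (D : Set (EuclideanSpace ℝ (Fin 2))), IsOpen D →
      Bornology.IsBounded D → (EMetric.diam D).toReal ^ 2 ≤ T →
      ∀ x ∈ D, ∀ y ∈ D, x ≠ y →
        (∫ t in Ioc (0:ℝ) T,
            min 1 (infDist x Dᶜ / Real.sqrt t) * min 1 (infDist y Dᶜ / Real.sqrt t) *
              min t⁻¹ (t / dist x y ^ 4)) ≤
          c * Real.log (1 + infDist x Dᶜ * infDist y Dᶜ / dist x y ^ 2) := by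
  refine ⟨5, by norm_num, ?_⟩
  intro D hDopen hDbdd hdiam x hx y hy hxy
  have hdiam' : Metric.diam D ^ 2 ≤ T := hdiam
  have hdnn : 0 ≤ Metric.diam D := diam_nonneg
  have ha : 0 ≤ infDist x Dᶜ := infDist_nonneg
  have hb : 0 ≤ infDist y Dᶜ := infDist_nonneg
  have hr : 0 < dist x y := dist_pos.2 hxy
  have hrd : dist x y ≤ Metric.diam D := dist_le_diam_of_mem hDbdd hx hy
  have hrT : dist x y ^ 2 ≤ T := le_trans (by nlinarith) hdiam'
  have hxd : infDist x Dᶜ ≤ Metric.diam D := aux_infDist_le_diam D hDbdd hx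
  have hyd : infDist y Dᶜ ≤ Metric.diam D := aux_infDist_le_diam D hDbdd hy
  have hab : infDist x Dᶜ * infDist y Dᶜ ≤ T := le_trans (by nlinarith) hdiam'
  exact aux_core _ _ _ _ ha hb hr hT hrT hab
end

section
/- Let $d = 1$ and $T > 0$. There is a constant $c > 0$ (depending on $T$) such that for all distinct $x, y$ in a bounded open set $D \subset \mathbb{R}$ with $\mathrm{diam}(D)^2 \le T$: $$\int_0^T \Big(1 \wedge \frac{\delta_D(x)}{\sqrt t}\Big)\Big(1 \wedge \frac{\delta_D(y)}{\sqrt t}\Big)\Big(t^{-1/2} \wedge \frac{t}{|x-y|^{3}}\Big) dt \le c\, \Big[\big(\delta_D(x)\delta_D(y)\big)^{1/2} \wedge \frac{\delta_D(x)\delta_D(y)}{|x-y|}\Big].$$ -/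
open Set MeasureTheory Metric

private lemma mul3_le {p q s p' q' s' : ℝ} (h1 : p ≤ p') (h2 : q ≤ q') (h3 : s ≤ s')
    (hq : 0 ≤ q) (hs : 0 ≤ s) (hp' : 0 ≤ p') (hq' : 0 ≤ q') : p * q * s ≤ p' * q' * s' :=
  mul_le_mul (mul_le_mul h1 h2 hq hp') h3 hs (mul_nonneg hp' hq')

private lemma core (T a b r : ℝ) (hT : 0 < T) (ha : 0 < a) (hb : 0 < b) (hr : 0 < r)
    (hrT : r ^ 2 ≤ T) (habT : a * b ≤ T) :
    (∫ t in Ioc (0:ℝ) T,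
        min 1 (a / Real.sqrt t) * min 1 (b / Real.sqrt t) *
          min (t ^ (-(1:ℝ) / 2)) (t / r ^ 3)) ≤
      4 * min (Real.sqrt (a * b)) (a * b / r) := by
  set f : ℝ → ℝ := fun t => min 1 (a / Real.sqrt t) * min 1 (b / Real.sqrt t) *
      min (t ^ (-(1:ℝ) / 2)) (t / r ^ 3) with hf_def
  have hfm : Measurable f := by fun_prop
  -- pointwise nonnegativity on (0, ∞)
  have hf_nonneg : ∀ t : ℝ, 0 < t → 0 ≤ f t := by
    intro t ht
    have h1 : (0:ℝ) ≤ min 1 (a / Real.sqrt t) :=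
      le_min zero_le_one (div_nonneg ha.le (Real.sqrt_nonneg t))
    have h2 : (0:ℝ) ≤ min 1 (b / Real.sqrt t) :=
      le_min zero_le_one (div_nonneg hb.le (Real.sqrt_nonneg t))
    have h3 : (0:ℝ) ≤ min (t ^ (-(1:ℝ) / 2)) (t / r ^ 3) :=
      le_min (Real.rpow_nonneg ht.le _) (div_nonneg ht.le (by positivity))
    exact mul_nonneg (mul_nonneg h1 h2) h3
  -- boundedness on (0, T]
  have hf_bdd : ∀ t ∈ Ioc (0:ℝ) T, ‖f t‖ ≤ T / r ^ 3 := by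
    intro t ht
    rw [Real.norm_eq_abs, abs_of_nonneg (hf_nonneg t ht.1)]
    have h1 : min 1 (a / Real.sqrt t) ≤ 1 := min_le_left _ _
    have h2 : min 1 (b / Real.sqrt t) ≤ 1 := min_le_left _ _
    have h3 : min (t ^ (-(1:ℝ) / 2)) (t / r ^ 3) ≤ T / r ^ 3 :=
      (min_le_right _ _).trans (by gcongr; exact ht.2)
    calc f t ≤ 1 * 1 * (T / r ^ 3) := by
          refine mul3_le h1 h2 h3 ?_ ?_ zero_le_one zero_le_one
          · exact le_min zero_le_one (div_nonneg hb.le (Real.sqrt_nonneg t))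
          · exact le_min (Real.rpow_nonneg ht.1.le _) (div_nonneg ht.1.le (by positivity))
      _ = T / r ^ 3 := by ring
  -- integrability on subintervals
  have hInt : ∀ s u : ℝ, 0 ≤ s → u ≤ T → IntegrableOn f (Ioc s u) := by
    intro s u hs huT
    refine Measure.integrableOn_of_bounded (M := T / r ^ 3) ?_ hfm.aestronglyMeasurable ?_
    · simp [Real.volume_Ioc]
    · filter_upwards [ae_restrict_mem measurableSet_Ioc] with t ht
      exact hf_bdd t ⟨lt_of_le_of_lt hs ht.1, ht.2.trans huT⟩
  -- splitting the integral
  have hsplit : ∀ s : ℝ, 0 < s → s ≤ T →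
      (∫ t in Ioc (0:ℝ) T, f t) = (∫ t in Ioc (0:ℝ) s, f t) + ∫ t in Ioc s T, f t := by
    intro s hs hsT
    rw [← Ioc_union_Ioc_eq_Ioc hs.le hsT,
      setIntegral_union (by exact Ioc_disjoint_Ioc_of_le le_rfl) measurableSet_Ioc
        (hInt 0 s le_rfl hsT) (hInt s T hs.le le_rfl)]
  -- the common tail bound: ∫_{(s,T]} f ≤ 2 a b * s^(-1/2) for 0 < s ≤ T
  have htail : ∀ s : ℝ, 0 < s → s ≤ T →
      (∫ t in Ioc s T, f t) ≤ 2 * (a * b) * s ^ (-(1:ℝ) / 2) := by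
    intro s hs hsT
    have hle : (∫ t in Ioc s T, f t) ≤ ∫ t in Ioc s T, a * b * t ^ (-(3:ℝ) / 2) := by
      refine setIntegral_mono_on (hInt s T hs.le le_rfl) ?_ measurableSet_Ioc ?_
      · refine Measure.integrableOn_of_bounded (M := a * b * s ^ (-(3:ℝ) / 2)) ?_
          (by fun_prop : Measurable fun t : ℝ => a * b * t ^ (-(3:ℝ) / 2)).aestronglyMeasurable ?_
        · simp [Real.volume_Ioc]
        · filter_upwards [ae_restrict_mem measurableSet_Ioc] with t ht
          have htnn : (0:ℝ) ≤ t ^ (-(3:ℝ) / 2) := Real.rpow_nonneg (lt_trans hs ht.1).le _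
          rw [Real.norm_eq_abs, abs_of_nonneg (by positivity)]
          have : t ^ (-(3:ℝ) / 2) ≤ s ^ (-(3:ℝ) / 2) :=
            Real.rpow_le_rpow_of_nonpos hs ht.1.le (by norm_num)
          nlinarith [mul_pos ha hb]
      · intro t ht
        have ht0 : 0 < t := lt_trans hs ht.1
        have hst : Real.sqrt t ≠ 0 := by positivity
        have key : a / Real.sqrt t * (b / Real.sqrt t) * t ^ (-(1:ℝ) / 2)
            = a * b * t ^ (-(3:ℝ) / 2) := by
          rw [div_mul_div_comm, Real.mul_self_sqrt ht0.le,
            show (-(3:ℝ) / 2) = (-1) + (-(1:ℝ) / 2) by norm_num,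
            Real.rpow_add ht0, Real.rpow_neg_one]
          field_simp
        rw [← key]
        exact mul3_le (min_le_right _ _) (min_le_right _ _) (min_le_left _ _)
          (le_min zero_le_one (div_nonneg hb.le (Real.sqrt_nonneg t)))
          (le_min (Real.rpow_nonneg ht0.le _) (div_nonneg ht0.le (by positivity)))
          (div_nonneg ha.le (Real.sqrt_nonneg t)) (div_nonneg hb.le (Real.sqrt_nonneg t))
    have heval : (∫ t in Ioc s T, a * b * t ^ (-(3:ℝ) / 2))
        = a * b * ((T ^ (-(1:ℝ) / 2) - s ^ (-(1:ℝ) / 2)) / (-(1:ℝ) / 2)) := by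
      rw [← intervalIntegral.integral_of_le hsT, intervalIntegral.integral_const_mul,
        integral_rpow (Or.inr ⟨by norm_num, by
          rw [Set.uIcc_of_le hsT]; rintro ⟨h1, -⟩; exact absurd h1 (not_le.mpr hs)⟩)]
      norm_num
    have hTnn : (0:ℝ) ≤ T ^ (-(1:ℝ) / 2) := Real.rpow_nonneg hT.le _
    have hsnn : (0:ℝ) ≤ s ^ (-(1:ℝ) / 2) := Real.rpow_nonneg hs.le _
    calc (∫ t in Ioc s T, f t) ≤ a * b * ((T ^ (-(1:ℝ) / 2) - s ^ (-(1:ℝ) / 2)) / (-(1:ℝ) / 2)) :=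
          hle.trans_eq heval
      _ = 2 * (a * b) * (s ^ (-(1:ℝ) / 2) - T ^ (-(1:ℝ) / 2)) := by ring
      _ ≤ 2 * (a * b) * s ^ (-(1:ℝ) / 2) := by nlinarith [mul_nonneg (mul_pos ha hb).le hTnn]
  have hab : 0 < a * b := mul_pos ha hb
  have hr2 : (0:ℝ) < r ^ 2 := by positivity
  -- Bound A : I ≤ 4 * (a*b/r)
  have hA : (∫ t in Ioc (0:ℝ) T, f t) ≤ 4 * (a * b / r) := by
    have h1 : (∫ t in Ioc (0:ℝ) (r ^ 2), f t) ≤ a * b / r := by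
      have hle : (∫ t in Ioc (0:ℝ) (r ^ 2), f t) ≤ ∫ _t in Ioc (0:ℝ) (r ^ 2), a * b / r ^ 3 := by
        refine setIntegral_mono_on (hInt 0 (r ^ 2) le_rfl hrT)
          (integrableOn_const measure_Ioc_lt_top.ne) measurableSet_Ioc ?_
        intro t ht
        have ht0 : 0 < t := ht.1
        have hst : Real.sqrt t ≠ 0 := by positivity
        have key : a / Real.sqrt t * (b / Real.sqrt t) * (t / r ^ 3) = a * b / r ^ 3 := by
          rw [div_mul_div_comm, Real.mul_self_sqrt ht0.le]
          field_simp
        rw [← key]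
        exact mul3_le (min_le_right _ _) (min_le_right _ _) (min_le_right _ _)
          (le_min zero_le_one (div_nonneg hb.le (Real.sqrt_nonneg t)))
          (le_min (Real.rpow_nonneg ht0.le _) (div_nonneg ht0.le (by positivity)))
          (div_nonneg ha.le (Real.sqrt_nonneg t)) (div_nonneg hb.le (Real.sqrt_nonneg t))
      calc (∫ t in Ioc (0:ℝ) (r ^ 2), f t) ≤ ∫ _t in Ioc (0:ℝ) (r ^ 2), a * b / r ^ 3 := hle
        _ = r ^ 2 * (a * b / r ^ 3) := by
            rw [setIntegral_const, measureReal_def, Real.volume_Ioc, smul_eq_mul, sub_zero,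
              ENNReal.toReal_ofReal hr2.le]
        _ = a * b / r := by field_simp
    have h2 : (∫ t in Ioc (r ^ 2) T, f t) ≤ 2 * (a * b) * r⁻¹ := by
      have hrw : ((r:ℝ) ^ 2) ^ (-(1:ℝ) / 2) = r⁻¹ := by
        rw [← Real.rpow_natCast r 2, ← Real.rpow_mul hr.le,
          show (((2:ℕ):ℝ) * (-(1:ℝ) / 2)) = -1 by norm_num, Real.rpow_neg_one]
      have := htail (r ^ 2) hr2 hrT
      rwa [hrw] at this
    calc (∫ t in Ioc (0:ℝ) T, f t)
        = (∫ t in Ioc (0:ℝ) (r ^ 2), f t) + ∫ t in Ioc (r ^ 2) T, f t := hsplit (r ^ 2) hr2 hrT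
      _ ≤ a * b / r + 2 * (a * b) * r⁻¹ := add_le_add h1 h2
      _ ≤ 4 * (a * b / r) := by rw [div_eq_mul_inv]; nlinarith [mul_nonneg hab.le (inv_nonneg.2 hr.le)]
  -- Bound B : I ≤ 4 * √(a*b)
  have hB : (∫ t in Ioc (0:ℝ) T, f t) ≤ 4 * Real.sqrt (a * b) := by
    have h1 : (∫ t in Ioc (0:ℝ) (a * b), f t) ≤ 2 * Real.sqrt (a * b) := by
      have hle : (∫ t in Ioc (0:ℝ) (a * b), f t) ≤ ∫ t in Ioc (0:ℝ) (a * b), t ^ (-(1:ℝ) / 2) := by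
        refine setIntegral_mono_on (hInt 0 (a * b) le_rfl habT) ?_ measurableSet_Ioc ?_
        · have : IntervalIntegrable (fun t : ℝ => t ^ (-(1:ℝ) / 2)) volume 0 (a * b) :=
            intervalIntegral.intervalIntegrable_rpow' (by norm_num)
          exact (intervalIntegrable_iff_integrableOn_Ioc_of_le hab.le).mp this
        · intro t ht
          have ht0 : 0 < t := ht.1
          calc f t ≤ 1 * 1 * t ^ (-(1:ℝ) / 2) :=
              mul3_le (min_le_left _ _) (min_le_left _ _) (min_le_left _ _)
                (le_min zero_le_one (div_nonneg hb.le (Real.sqrt_nonneg t)))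
                (le_min (Real.rpow_nonneg ht0.le _) (div_nonneg ht0.le (by positivity)))
                zero_le_one zero_le_one
            _ = t ^ (-(1:ℝ) / 2) := by ring
      have heval : (∫ t in Ioc (0:ℝ) (a * b), t ^ (-(1:ℝ) / 2)) = 2 * Real.sqrt (a * b) := by
        rw [← intervalIntegral.integral_of_le hab.le, integral_rpow (Or.inl (by norm_num))]
        rw [show (-(1:ℝ) / 2 + 1) = 1 / 2 by norm_num, Real.zero_rpow (by norm_num),
          ← Real.sqrt_eq_rpow]
        ring
      exact hle.trans_eq heval
    have h2 : (∫ t in Ioc (a * b) T, f t) ≤ 2 * Real.sqrt (a * b) := by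
      have hrw : (a * b) ^ (-(1:ℝ) / 2) = (Real.sqrt (a * b))⁻¹ := by
        rw [show (-(1:ℝ) / 2) = -(1 / 2 : ℝ) by norm_num, Real.rpow_neg hab.le,
          ← Real.sqrt_eq_rpow]
      have hsq : 0 < Real.sqrt (a * b) := Real.sqrt_pos.mpr hab
      have := htail (a * b) hab habT
      rw [hrw] at this
      refine this.trans (le_of_eq ?_)
      rw [← Real.mul_self_sqrt hab.le]
      field_simp
      rw [Real.sqrt_sq hsq.le]
    calc (∫ t in Ioc (0:ℝ) T, f t)
        = (∫ t in Ioc (0:ℝ) (a * b), f t) + ∫ t in Ioc (a * b) T, f t := hsplit (a * b) hab habT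
      _ ≤ 2 * Real.sqrt (a * b) + 2 * Real.sqrt (a * b) := add_le_add h1 h2
      _ = 4 * Real.sqrt (a * b) := by ring
  rcases le_total (Real.sqrt (a * b)) (a * b / r) with h | h
  · rw [min_eq_left h]; exact hB
  · rw [min_eq_right h]; exact hA

theorem stmt_8 (T : ℝ) (hT : 0 < T) :
    ∃ c > (0:ℝ), ∀ (D : Set ℝ), IsOpen D →
      Bornology.IsBounded D → (EMetric.diam D).toReal ^ 2 ≤ T →
      ∀ x ∈ D, ∀ y ∈ D, x ≠ y →
        (∫ t in Ioc (0:ℝ) T,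
            min 1 (infDist x Dᶜ / Real.sqrt t) * min 1 (infDist y Dᶜ / Real.sqrt t) *
              min (t ^ (-(1:ℝ) / 2)) (t / |x - y| ^ 3)) ≤
          c * min (Real.sqrt (infDist x Dᶜ * infDist y Dᶜ))
            (infDist x Dᶜ * infDist y Dᶜ / |x - y|) := by
  refine ⟨4, by norm_num, ?_⟩
  intro D hD hbd hdiam x hx y hy hxy
  have hr : 0 < |x - y| := abs_pos.mpr (sub_ne_zero.mpr hxy)
  obtain ⟨R, hR⟩ := hbd.subset_closedBall 0
  have hne : Dᶜ.Nonempty := by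
    refine ⟨|R| + 1, fun hmem => ?_⟩
    have h1 := mem_closedBall.mp (hR hmem)
    rw [Real.dist_eq, sub_zero, abs_of_nonneg (by positivity)] at h1
    have := le_abs_self R
    linarith
  have ha : 0 < infDist x Dᶜ :=
    (hD.isClosed_compl.notMem_iff_infDist_pos hne).mp (Set.notMem_compl_iff.mpr hx)
  have hb : 0 < infDist y Dᶜ :=
    (hD.isClosed_compl.notMem_iff_infDist_pos hne).mp (Set.notMem_compl_iff.mpr hy)
  have hdm : Metric.diam D ≤ Real.sqrt T := by
    rw [Real.le_sqrt diam_nonneg hT.le]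
    exact hdiam
  have hinfdiam : ∀ z ∈ D, 0 < infDist z Dᶜ → infDist z Dᶜ ≤ Metric.diam D := by
    intro z hz hz0
    have hmem : ∀ w : ℝ, |w - z| < infDist z Dᶜ → w ∈ D := by
      intro w hw
      by_contra h
      have h2 := infDist_le_dist_of_mem (x := z) (s := Dᶜ) h
      rw [Real.dist_eq, abs_sub_comm] at h2
      linarith
    have h1 : z + infDist z Dᶜ / 2 ∈ D := by
      refine hmem _ ?_
      rw [add_sub_cancel_left, abs_of_nonneg (by positivity)]
      linarith
    have h2 : z - infDist z Dᶜ / 2 ∈ D := by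
      refine hmem _ ?_
      rw [show z - infDist z Dᶜ / 2 - z = -(infDist z Dᶜ / 2) by ring, abs_neg,
        abs_of_nonneg (by positivity)]
      linarith
    have hd := dist_le_diam_of_mem hbd h2 h1
    rwa [Real.dist_eq,
      show z - infDist z Dᶜ / 2 - (z + infDist z Dᶜ / 2) = -infDist z Dᶜ by ring, abs_neg,
      abs_of_nonneg hz0.le] at hd
  have haD := hinfdiam x hx ha
  have hbD := hinfdiam y hy hb
  have hrD : |x - y| ≤ Metric.diam D := by
    rw [← Real.dist_eq]; exact dist_le_diam_of_mem hbd hx hy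
  have hsq := Real.sq_sqrt hT.le
  have hsn := Real.sqrt_nonneg T
  have hrT : |x - y| ^ 2 ≤ T := by nlinarith
  have habT : infDist x Dᶜ * infDist y Dᶜ ≤ T := by nlinarith
  exact core T (infDist x Dᶜ) (infDist y Dᶜ) (|x - y|) hT ha hb hr hrT habT
end
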